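/- Let M be a real symmetric n×n matrix with equitable partition (MC = CB), and let μ be an eigenvalue of B whose geometric multiplicity for B equals its multiplicity for M. Then the μ-core vertex set of M is exactly the union of blocks V_i over indices i such that some μ-eigenvector of B has a nonzero i-th entry. -/
import Mathlib


/-- For an equitable partition of a real symmetric matrix `M` (`MC = CB`) and an
eigenvalue `μ` of `B` whose geometric multiplicity for `B` equals its multiplicity for `M`,
the `μ`-core vertex set of `M` is exactly the union of the blocks whose index carries a nonzero
entry of some `μ`-eigenvector of `B`. -/
theorem core_vertices_eq_union_of_blocks
    {n k : ℕ} (M : Matrix (Fin n) (Fin n) ℝ) (hM : M.IsSymm)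
    (blk : Fin n → Fin k) (hblk : Function.Surjective blk)
    (C : Matrix (Fin n) (Fin k) ℝ)
    (hC : C = Matrix.of fun i j => if blk i = j then (1 : ℝ) else 0)
    (B : Matrix (Fin k) (Fin k) ℝ) (hB : M * C = C * B)
    (μ : ℝ) (hμ : ∃ x : Fin k → ℝ, x ≠ 0 ∧ B.mulVec x = μ • x)
    (hmult : Module.finrank ℝ (Module.End.eigenspace (Matrix.toLin' B) μ) =
             Module.finrank ℝ (Module.End.eigenspace (Matrix.toLin' M) μ))
    (CVμ : Set (Fin n))
    (hCVμ : CVμ = {j : Fin n | ∃ y : Fin n → ℝ, y ≠ 0 ∧ M.mulVec y = μ • y ∧ y j ≠ 0}) :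
    CVμ = {v : Fin n | ∃ x : Fin k → ℝ, x ≠ 0 ∧ B.mulVec x = μ • x ∧ x (blk v) ≠ 0} := by
  -- C.mulVec x = x ∘ blk
  have hCmul : ∀ x : Fin k → ℝ, C.mulVec x = fun i => x (blk i) := by
    intro x
    funext i
    simp [hC, Matrix.mulVec, dotProduct]
  have hCinj : Function.Injective C.mulVec := by
    intro x y hxy
    funext j
    obtain ⟨i, rfl⟩ := hblk j
    have := congrFun hxy i
    rw [hCmul, hCmul] at this
    exact this
  -- C maps B's eigenspace into M's eigenspace
  have hmap : ∀ x : Fin k → ℝ, B.mulVec x = μ • x →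
      M.mulVec (C.mulVec x) = μ • C.mulVec x := by
    intro x hx
    rw [Matrix.mulVec_mulVec, hB, ← Matrix.mulVec_mulVec, hx, Matrix.mulVec_smul]
  -- membership in eigenspaces
  have hmemB : ∀ x : Fin k → ℝ,
      x ∈ Module.End.eigenspace (Matrix.toLin' B) μ ↔ B.mulVec x = μ • x := by
    intro x
    rw [Module.End.mem_eigenspace_iff, Matrix.toLin'_apply]
  have hmemM : ∀ y : Fin n → ℝ,
      y ∈ Module.End.eigenspace (Matrix.toLin' M) μ ↔ M.mulVec y = μ • y := by
    intro y
    rw [Module.End.mem_eigenspace_iff, Matrix.toLin'_apply]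
  -- the restricted linear map
  set EB := Module.End.eigenspace (Matrix.toLin' B) μ
  set EM := Module.End.eigenspace (Matrix.toLin' M) μ
  let f : EB →ₗ[ℝ] EM :=
    LinearMap.codRestrict EM ((Matrix.toLin' C).comp EB.subtype) (by
      intro x
      rw [hmemM]
      simp only [LinearMap.comp_apply, Submodule.subtype_apply, Matrix.toLin'_apply]
      exact hmap x ((hmemB x).mp x.2))
  have hfinj : Function.Injective f := by
    intro a b hab
    have : C.mulVec a.1 = C.mulVec b.1 := by
      have := congrArg Subtype.val hab
      simpa [f, Matrix.toLin'_apply] using this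
    exact Subtype.ext (hCinj this)
  have hfsurj : Function.Surjective f :=
    (LinearMap.injective_iff_surjective_of_finrank_eq_finrank hmult).mp hfinj
  -- every M-eigenvector is C.mulVec of a B-eigenvector
  have hsur : ∀ y : Fin n → ℝ, M.mulVec y = μ • y →
      ∃ x : Fin k → ℝ, B.mulVec x = μ • x ∧ C.mulVec x = y := by
    intro y hy
    obtain ⟨x, hx⟩ := hfsurj ⟨y, (hmemM y).mpr hy⟩
    refine ⟨x.1, (hmemB x.1).mp x.2, ?_⟩
    have := congrArg Subtype.val hx
    simpa [f, Matrix.toLin'_apply] using this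
  ext v
  rw [hCVμ]
  simp only [Set.mem_setOf_eq]
  constructor
  · rintro ⟨y, hy0, hyv, hyj⟩
    obtain ⟨x, hx, hxy⟩ := hsur y hyv
    refine ⟨x, ?_, hx, ?_⟩
    · rintro rfl
      apply hy0
      rw [← hxy]
      simp
    · have hv : x (blk v) = y v := by
        have := congrFun hxy v
        rw [hCmul] at this
        exact this
      rwa [hv]
  · rintro ⟨x, hx0, hx, hxv⟩
    refine ⟨C.mulVec x, ?_, hmap x hx, ?_⟩
    · intro h
      apply hx0
      apply hCinj
      simpa using h
    · rw [hCmul]; exact hxv
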